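/- Let E be a real inner product space, let B be a finite index set, x : B → E, y : B → ℝ, and let R, b, w ≥ 0 satisfy ‖x_i‖ ≤ R and |y_i| ≤ b for all i ∈ B. Then for any θ, θ' ∈ E with ‖θ‖ ≤ w and ‖θ'‖ ≤ w, Σ_{i ∈ B} (y_i − ⟨θ', x_i⟩)² − Σ_{i ∈ B} (y_i − ⟨θ, x_i⟩)² ≤ 2(wR + b) · √( |B| · Σ_{i ∈ B} ⟨θ' − θ, x_i⟩² ). -/
import Mathlib


open scoped RealInnerProductSpace

/-- Closeness of two regression parameters in the data-dependent `Σ_B`-norm controls the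
difference of their least-squares errors. -/
theorem stmt_11 {E : Type*} [NormedAddCommGroup E] [InnerProductSpace ℝ E]
    {ι : Type*} [Fintype ι] (x : ι → E) (y : ι → ℝ)
    (R b w : ℝ) (hR : 0 ≤ R) (hb : 0 ≤ b) (hw : 0 ≤ w)
    (hx : ∀ i, ‖x i‖ ≤ R) (hy : ∀ i, |y i| ≤ b)
    (θ θ' : E) (hθ : ‖θ‖ ≤ w) (hθ' : ‖θ'‖ ≤ w) :
    ∑ i, (y i - ⟪θ', x i⟫) ^ 2 - ∑ i, (y i - ⟪θ, x i⟫) ^ 2 ≤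
      2 * (w * R + b) *
        Real.sqrt ((Fintype.card ι) * ∑ i, ⟪θ' - θ, x i⟫ ^ 2) := by
  classical
  set c : ι → ℝ := fun i => ⟪θ' - θ, x i⟫ with hc
  set d : ι → ℝ := fun i => (y i - ⟪θ', x i⟫) + (y i - ⟪θ, x i⟫) with hd
  set K : ℝ := 2 * (w * R + b) with hK
  have hK0 : 0 ≤ K := by positivity
  -- pointwise bound on d
  have hdb : ∀ i, d i ^ 2 ≤ K ^ 2 := by
    intro i
    have h1 : |⟪θ', x i⟫| ≤ w * R := by
      calc |⟪θ', x i⟫| ≤ ‖θ'‖ * ‖x i‖ := abs_real_inner_le_norm _ _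
        _ ≤ w * R := mul_le_mul hθ' (hx i) (norm_nonneg _) hw
    have h2 : |⟪θ, x i⟫| ≤ w * R := by
      calc |⟪θ, x i⟫| ≤ ‖θ‖ * ‖x i‖ := abs_real_inner_le_norm _ _
        _ ≤ w * R := mul_le_mul hθ (hx i) (norm_nonneg _) hw
    have hd1 : |d i| ≤ K := by
      have := hy i
      simp only [hd, hK]
      calc |(y i - ⟪θ', x i⟫) + (y i - ⟪θ, x i⟫)|
          ≤ |y i - ⟪θ', x i⟫| + |y i - ⟪θ, x i⟫| := abs_add_le _ _
        _ ≤ (|y i| + |⟪θ', x i⟫|) + (|y i| + |⟪θ, x i⟫|) :=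
            add_le_add (abs_sub _ _) (abs_sub _ _)
        _ ≤ (b + w * R) + (b + w * R) := by
            exact add_le_add (add_le_add (hy i) h1) (add_le_add (hy i) h2)
        _ = 2 * (w * R + b) := by ring
    calc d i ^ 2 = |d i| ^ 2 := (sq_abs _).symm
      _ ≤ K ^ 2 := pow_le_pow_left₀ (abs_nonneg _) hd1 2
  have key : ∑ i, (y i - ⟪θ', x i⟫) ^ 2 - ∑ i, (y i - ⟪θ, x i⟫) ^ 2
      = ∑ i, (-c i) * d i := by
    rw [← Finset.sum_sub_distrib]
    refine Finset.sum_congr rfl fun i _ => ?_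
    simp only [hc, hd, inner_sub_left]
    ring
  rw [key]
  have hcs : (∑ i, (-c i) * d i) ^ 2 ≤ (∑ i, c i ^ 2) * ∑ i, d i ^ 2 := by
    calc (∑ i, (-c i) * d i) ^ 2
        ≤ (∑ i, (-c i) ^ 2) * ∑ i, d i ^ 2 :=
          Finset.sum_mul_sq_le_sq_mul_sq Finset.univ _ _
      _ = (∑ i, c i ^ 2) * ∑ i, d i ^ 2 := by simp [neg_pow]
  have hd2 : (∑ i, d i ^ 2) ≤ (Fintype.card ι) * K ^ 2 := by
    calc ∑ i, d i ^ 2 ≤ ∑ _i : ι, K ^ 2 := Finset.sum_le_sum fun i _ => hdb i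
      _ = (Fintype.card ι) * K ^ 2 := by simp [Finset.sum_const, nsmul_eq_mul]
  have hc2 : 0 ≤ ∑ i, c i ^ 2 := Finset.sum_nonneg fun i _ => sq_nonneg _
  have h3 : (∑ i, (-c i) * d i) ^ 2 ≤ K ^ 2 * ((Fintype.card ι) * ∑ i, c i ^ 2) := by
    calc (∑ i, (-c i) * d i) ^ 2 ≤ (∑ i, c i ^ 2) * ∑ i, d i ^ 2 := hcs
      _ ≤ (∑ i, c i ^ 2) * ((Fintype.card ι) * K ^ 2) := by
          exact mul_le_mul_of_nonneg_left hd2 hc2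
      _ = K ^ 2 * ((Fintype.card ι) * ∑ i, c i ^ 2) := by ring
  have h4 : ∑ i, (-c i) * d i ≤ Real.sqrt (K ^ 2 * ((Fintype.card ι) * ∑ i, c i ^ 2)) := by
    refine le_trans (le_abs_self _) ?_
    rw [← Real.sqrt_sq_eq_abs]
    exact Real.sqrt_le_sqrt h3
  rwa [Real.sqrt_mul (sq_nonneg K), Real.sqrt_sq hK0] at h4
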